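/- Consider a one-parameter exponential family f(x;θ) = c(x) exp(θx − b(θ)) with prior density p for θ. Suppose the true density f₀ has mean μ₀ = b'(θ₀) and variance σ₀² ∈ (0,∞), and the model density f(·;θ₀) has mean b'(θ₀) and variance b''(θ₀) ∈ (0,∞). Assume all relevant integrals are finite. Then the power parameter satisfies w² = (b''(θ₀) + c₀) / (σ₀² + c₀), where c₀ = ∫ (b'(θ₀) − b'(θ))² p(θ) dθ ≥ 0; in particular w < 1 if and only if σ₀² > b''(θ₀), w > 1 if and only if σ₀² < b''(θ₀), and w = 1 if and only if σ₀² = b''(θ₀). -/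
import Mathlib


open MeasureTheory

/-- For a one-parameter exponential family `f(x;θ) = c(x) exp(θx − b(θ))`
with prior `p`, true density `f₀` with mean `b'(θ₀)` and variance `σ₀²`, and model density
`f(·;θ₀)` with mean `b'(θ₀)` and variance `b''(θ₀)`, the power parameter defined by
`w² = ∫ Δ(x) f(x;θ₀) dx / ∫ Δ(x) f₀(x) dx` satisfies
`w² = (b''(θ₀) + c₀)/(σ₀² + c₀)` with `c₀ = ∫ (b'(θ₀) − b'(θ))² p(θ) dθ`; in particular
`w < 1 ↔ σ₀² > b''(θ₀)`, `w > 1 ↔ σ₀² < b''(θ₀)`, and `w = 1 ↔ σ₀² = b''(θ₀)`. -/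
theorem exponential_family_power_parameter
    (c : ℝ → ℝ) (hc_pos : ∀ x, 0 < c x) (hc_meas : Measurable c)
    (b : ℝ → ℝ) (θ₀ : ℝ)
    (p : ℝ → ℝ) (hp_meas : Measurable p) (hp_nonneg : ∀ θ, 0 ≤ p θ)
    (hp_int : Integrable p) (hp_one : ∫ θ, p θ = 1)
    -- the true density f₀, with mean b'(θ₀) and variance σ₀²
    (f₀ : ℝ → ℝ) (hf₀_meas : Measurable f₀) (hf₀_nonneg : ∀ x, 0 ≤ f₀ x)
    (hf₀_int : Integrable f₀) (hf₀_one : ∫ x, f₀ x = 1)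
    (hf₀_mean_int : Integrable (fun x => x * f₀ x))
    (hf₀_mean : ∫ x, x * f₀ x = deriv b θ₀)
    (σ₀sq : ℝ) (hσ_int : Integrable (fun x => (x - deriv b θ₀) ^ 2 * f₀ x))
    (hσ : σ₀sq = ∫ x, (x - deriv b θ₀) ^ 2 * f₀ x) (hσ_pos : 0 < σ₀sq)
    -- the model density f(·;θ₀), with mean b'(θ₀) and variance b''(θ₀)
    (g : ℝ → ℝ) (hg_def : ∀ x, g x = c x * Real.exp (θ₀ * x - b θ₀))
    (hg_int : Integrable g) (hg_one : ∫ x, g x = 1)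
    (hg_mean_int : Integrable (fun x => x * g x))
    (hg_mean : ∫ x, x * g x = deriv b θ₀)
    (hg_var_int : Integrable (fun x => (x - deriv b θ₀) ^ 2 * g x))
    (hg_var : ∫ x, (x - deriv b θ₀) ^ 2 * g x = deriv (deriv b) θ₀)
    (hb''_pos : 0 < deriv (deriv b) θ₀)
    -- all relevant integrals finite
    (hjoint_f₀ : Integrable
      (fun q : ℝ × ℝ => (q.1 - deriv b q.2) ^ 2 * f₀ q.1 * p q.2) (volume.prod volume))
    (hjoint_g : Integrable
      (fun q : ℝ × ℝ => (q.1 - deriv b q.2) ^ 2 * g q.1 * p q.2) (volume.prod volume))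
    (c₀ : ℝ) (hc₀ : c₀ = ∫ θ, (deriv b θ₀ - deriv b θ) ^ 2 * p θ)
    (hc₀_int : Integrable (fun θ => (deriv b θ₀ - deriv b θ) ^ 2 * p θ))
    -- the power parameter
    (w : ℝ) (hw_pos : 0 < w)
    (hw : w ^ 2 = (∫ x, (∫ θ, (x - deriv b θ) ^ 2 * p θ) * g x)
                / (∫ x, (∫ θ, (x - deriv b θ) ^ 2 * p θ) * f₀ x)) :
    w ^ 2 = (deriv (deriv b) θ₀ + c₀) / (σ₀sq + c₀)
    ∧ (w < 1 ↔ σ₀sq > deriv (deriv b) θ₀)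
    ∧ (w > 1 ↔ σ₀sq < deriv (deriv b) θ₀)
    ∧ (w = 1 ↔ σ₀sq = deriv (deriv b) θ₀) := by
  set μ := deriv b θ₀ with hμ
  -- integrability of the cross term in θ
  have hp_int2 : Integrable (fun θ => (μ - deriv b θ) * p θ) := by
    have hmeas : AEStronglyMeasurable (fun θ => (μ - deriv b θ) * p θ) volume := by
      exact (((measurable_const.sub (measurable_deriv b)).mul hp_meas)).aestronglyMeasurable
    refine (hc₀_int.add hp_int).mono hmeas ?_
    filter_upwards with θ
    simp only [Pi.add_apply, Real.norm_eq_abs]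
    have h2 : 0 ≤ p θ := hp_nonneg θ
    have h1 : 0 ≤ (μ - deriv b θ) ^ 2 * p θ := mul_nonneg (sq_nonneg _) h2
    rw [abs_mul, abs_of_nonneg h2, abs_of_nonneg (add_nonneg h1 h2)]
    nlinarith [abs_nonneg (μ - deriv b θ), sq_abs (μ - deriv b θ),
      mul_nonneg (sq_nonneg (|μ - deriv b θ| - 1)) h2]
  set m := ∫ θ, (μ - deriv b θ) * p θ with hm
  have hinner : ∀ x : ℝ, (∫ θ, (x - deriv b θ) ^ 2 * p θ)
      = (x - μ) ^ 2 + 2 * (x - μ) * m + c₀ := by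
    intro x
    have eA : ∫ θ, ((2 * (x - μ)) * ((μ - deriv b θ) * p θ) + (μ - deriv b θ) ^ 2 * p θ)
        = (∫ θ, (2 * (x - μ)) * ((μ - deriv b θ) * p θ)) + ∫ θ, (μ - deriv b θ) ^ 2 * p θ :=
      integral_add (hp_int2.const_mul _) hc₀_int
    have eB : ∫ θ, ((x - μ) ^ 2 * p θ
          + ((2 * (x - μ)) * ((μ - deriv b θ) * p θ) + (μ - deriv b θ) ^ 2 * p θ))
        = (∫ θ, (x - μ) ^ 2 * p θ)
          + ((∫ θ, (2 * (x - μ)) * ((μ - deriv b θ) * p θ)) + ∫ θ, (μ - deriv b θ) ^ 2 * p θ) :=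
      (integral_add (hp_int.const_mul _) ((hp_int2.const_mul _).add hc₀_int)).trans
        (congrArg (fun t => (∫ θ, (x - μ) ^ 2 * p θ) + t) eA)
    calc ∫ θ, (x - deriv b θ) ^ 2 * p θ
        = ∫ θ, ((x - μ) ^ 2 * p θ
            + ((2 * (x - μ)) * ((μ - deriv b θ) * p θ) + (μ - deriv b θ) ^ 2 * p θ)) := by
          congr 1; funext θ; ring
      _ = (∫ θ, (x - μ) ^ 2 * p θ)
            + ((∫ θ, (2 * (x - μ)) * ((μ - deriv b θ) * p θ))
              + ∫ θ, (μ - deriv b θ) ^ 2 * p θ) := eB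
      _ = (x - μ) ^ 2 + 2 * (x - μ) * m + c₀ := by
          rw [integral_const_mul, integral_const_mul, hp_one, ← hm, ← hc₀]; ring
  have key : ∀ (h : ℝ → ℝ), Integrable h → (∫ x, h x = 1) →
      Integrable (fun x => x * h x) → (∫ x, x * h x = μ) →
      Integrable (fun x => (x - μ) ^ 2 * h x) →
      ∫ x, (∫ θ, (x - deriv b θ) ^ 2 * p θ) * h x
        = (∫ x, (x - μ) ^ 2 * h x) + c₀ := by
    intro h hint hone hmint hmean hvint
    have eA : ∫ x, ((2 * m) * (x * h x) + (-(2 * m * μ) + c₀) * h x)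
        = (∫ x, (2 * m) * (x * h x)) + ∫ x, (-(2 * m * μ) + c₀) * h x :=
      integral_add (hmint.const_mul _) (hint.const_mul _)
    have eB : ∫ x, ((x - μ) ^ 2 * h x + ((2 * m) * (x * h x) + (-(2 * m * μ) + c₀) * h x))
        = (∫ x, (x - μ) ^ 2 * h x)
          + ((∫ x, (2 * m) * (x * h x)) + ∫ x, (-(2 * m * μ) + c₀) * h x) :=
      (integral_add hvint ((hmint.const_mul _).add (hint.const_mul _))).trans
        (congrArg (fun t => (∫ x, (x - μ) ^ 2 * h x) + t) eA)
    calc ∫ x, (∫ θ, (x - deriv b θ) ^ 2 * p θ) * h x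
        = ∫ x, ((x - μ) ^ 2 * h x + ((2 * m) * (x * h x) + (-(2 * m * μ) + c₀) * h x)) := by
          congr 1; funext x; rw [hinner x]; ring
      _ = (∫ x, (x - μ) ^ 2 * h x)
            + ((∫ x, (2 * m) * (x * h x)) + ∫ x, (-(2 * m * μ) + c₀) * h x) := eB
      _ = (∫ x, (x - μ) ^ 2 * h x) + c₀ := by
          rw [integral_const_mul, integral_const_mul, hone, hmean]; ring
  have hnum : ∫ x, (∫ θ, (x - deriv b θ) ^ 2 * p θ) * g x = deriv (deriv b) θ₀ + c₀ := by
    rw [key g hg_int hg_one hg_mean_int hg_mean hg_var_int, hg_var]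
  have hden : ∫ x, (∫ θ, (x - deriv b θ) ^ 2 * p θ) * f₀ x = σ₀sq + c₀ := by
    rw [key f₀ hf₀_int hf₀_one hf₀_mean_int hf₀_mean hσ_int, ← hσ]
  have hc₀_nonneg : 0 ≤ c₀ := by
    rw [hc₀]
    exact integral_nonneg fun θ => mul_nonneg (sq_nonneg _) (hp_nonneg θ)
  have hden_pos : 0 < σ₀sq + c₀ := by linarith
  rw [hnum, hden] at hw
  have hA : w ^ 2 < 1 ↔ w < 1 := pow_lt_one_iff_of_nonneg hw_pos.le two_ne_zero
  have hB : 1 < w ^ 2 ↔ 1 < w := one_lt_pow_iff_of_nonneg hw_pos.le two_ne_zero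
  have hC : w = 1 ↔ w ^ 2 = 1 := by
    constructor
    · rintro rfl; norm_num
    · intro h
      have h1 : ¬ w < 1 := fun hlt => absurd (hA.mpr hlt) (by rw [h]; exact lt_irrefl 1)
      have h2 : ¬ 1 < w := fun hlt => absurd (hB.mpr hlt) (by rw [h]; exact lt_irrefl 1)
      linarith [not_lt.mp h1, not_lt.mp h2]
  refine ⟨hw, ?_, ?_, ?_⟩
  · rw [← hA, hw, div_lt_one hden_pos]
    constructor <;> intro <;> linarith
  · rw [gt_iff_lt, ← hB, hw, lt_div_iff₀ hden_pos, one_mul]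
    constructor <;> intro <;> linarith
  · rw [hC, hw, div_eq_one_iff_eq (ne_of_gt hden_pos)]
    constructor <;> intro <;> linarith
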